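/- Let π be a 312-avoiding permutation of length n, and for 0 ≤ i ≤ n let τ_i be the output of the 312-insertion step at position i applied to π. Then the map i ↦ (|τ_i|, Des(τ_i)) is injective on {0,…,n}, where Des(σ) = {j : σ_j > σ_{j+1}} is the descent set of σ. In other words, knowing π together with the length and descent set of the result determines at which position the new maximum was inserted. -/

import Mathlib

open List

attribute [local instance] Classical.propDecidable

/-- `l` is a permutation of length `n`, i.e. a list containing each of `1,…,n` exactly once. -/
def IsPermList (n : ℕ) (l : List ℕ) : Prop :=
  l.Perm (List.range' 1 n)

/-- Two sequences (with distinct entries) are order-isomorphic: same length and the same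
pairwise order relations. -/
def OrderIsoList (a b : List ℕ) : Prop :=
  a.length = b.length ∧
    ∀ i j, i < j → j < a.length →
      (a.getD i 0 < a.getD j 0 ↔ b.getD i 0 < b.getD j 0)

/-- `l` contains the pattern `p`: some subsequence of `l` is order-isomorphic to `p`. -/
def ContainsPat (l p : List ℕ) : Prop :=
  ∃ s, s.Sublist l ∧ OrderIsoList s p

/-- `l` avoids the pattern `p`. -/
def AvoidsPat (l p : List ℕ) : Prop := ¬ ContainsPat l p

/-- Relabel the entries of a list of distinct naturals order-isomorphically with `1,…,m`. -/
def standardize (l : List ℕ) : List ℕ :=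
  l.map fun x => (l.filter fun y => y ≤ x).length

/-- Insert the new maximum value `l.length + 1` immediately after the first `i` entries. -/
def insertMax (l : List ℕ) (i : ℕ) : List ℕ :=
  l.take i ++ (l.length + 1) :: l.drop i

/-- The insertion step at position `i` for the pattern `p`: insert a new maximum after the
first `i` entries, keep the longest prefix avoiding `p` (i.e. remove the minimal suffix so
that the result avoids `p`), then standardize. -/
noncomputable def insStep (p l : List ℕ) (i : ℕ) : List ℕ :=
  standardize ((insertMax l i).take
    (Nat.findGreatest (fun k => AvoidsPat ((insertMax l i).take k) p)
      (insertMax l i).length))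

/-- The descent set of `l`: the set of (1-indexed) positions `j ∈ {1,…,m-1}` with
`l_j > l_{j+1}` (here `l.getD (j-1) 0` is the `j`-th entry of `l`). -/
def desSet (l : List ℕ) : Set ℕ :=
  {j | 1 ≤ j ∧ j < l.length ∧ l.getD j 0 < l.getD (j - 1) 0}
lemma contains312_iff (l : List ℕ) :
    ContainsPat l [3,1,2] ↔ ∃ x y z : ℕ, [x,y,z].Sublist l ∧ y < z ∧ z ≤ x := by
  constructor
  · rintro ⟨s, hs, hlen, hrel⟩
    simp only [length_cons, length_nil] at hlen
    match s, hlen with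
    | [x,y,z], _ =>
      refine ⟨x, y, z, hs, ?_, ?_⟩
      · have := hrel 1 2 (by norm_num) (by simp)
        simpa using this.mpr (by norm_num)
      · have := hrel 0 2 (by norm_num) (by simp)
        simp only [getD] at this
        by_contra hc
        push_neg at hc
        have := this.mp (by simpa using hc)
        norm_num at this
  · rintro ⟨x, y, z, hs, h1, h2⟩
    refine ⟨[x,y,z], hs, by simp, ?_⟩
    intro i j hij hj
    simp only [length_cons, length_nil] at hj
    have hj3 : j < 3 := by omega
    interval_cases j <;> interval_cases i <;> simp <;> omega
lemma standardize_length (l : List ℕ) : (standardize l).length = l.length := by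
  simp [standardize]

lemma standardize_lt_iff (l : List ℕ) {a b : ℕ} (hb : b ∈ l) :
    ((l.filter fun y => y ≤ a).length < (l.filter fun y => y ≤ b).length) ↔ a < b := by
  have key : ∀ a b : ℕ, a < b → b ∈ l →
      (l.filter fun y => y ≤ a).length < (l.filter fun y => y ≤ b).length := by
    intro a b hab hbl
    have hsub : (l.filter fun y => y ≤ a) <+ (l.filter fun y => y ≤ b) := by
      apply List.monotone_filter_right
      intro x hx
      simp only [decide_eq_true_eq] at *
      omega
    refine lt_of_le_of_ne hsub.length_le ?_
    intro heq
    have := hsub.eq_of_length heq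
    have hbmem : b ∈ l.filter fun y => y ≤ b := by
      simp [List.mem_filter, hbl]
    rw [← this] at hbmem
    simp [List.mem_filter] at hbmem
    omega
  constructor
  · intro hlt
    rcases lt_trichotomy a b with h | h | h
    · exact h
    · subst h; omega
    · by_cases hal : a ∈ l
      · exact absurd (key b a h hal) (by omega)
      · -- a ∉ l; filter(≤b) ⊆ filter(≤a) since a > b... still true without membership
        exfalso
        have hsub : (l.filter fun y => y ≤ b) <+ (l.filter fun y => y ≤ a) := by
          apply List.monotone_filter_right
          intro x hx
          simp only [decide_eq_true_eq] at *
          omega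
        exact absurd hsub.length_le (by omega)
  · intro hab; exact key a b hab hb

lemma standardize_desSet (l : List ℕ) : desSet (standardize l) = desSet l := by
  ext j
  simp only [desSet, Set.mem_setOf_eq, standardize_length]
  constructor <;> rintro ⟨h1, h2, h3⟩ <;> refine ⟨h1, h2, ?_⟩
  · have hj : j < l.length := h2
    have hj1 : j - 1 < l.length := by omega
    rw [getD_eq_getElem _ _ (by rwa [standardize_length]),
        getD_eq_getElem _ _ (by rwa [standardize_length])] at h3
    simp only [standardize, List.getElem_map] at h3
    rw [getD_eq_getElem _ _ hj, getD_eq_getElem _ _ hj1]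
    exact (standardize_lt_iff l (List.getElem_mem _)).mp h3
  · have hj : j < l.length := h2
    have hj1 : j - 1 < l.length := by omega
    rw [getD_eq_getElem _ _ hj, getD_eq_getElem _ _ hj1] at h3
    rw [getD_eq_getElem _ _ (by rwa [standardize_length]),
        getD_eq_getElem _ _ (by rwa [standardize_length])]
    simp only [standardize, List.getElem_map]
    exact (standardize_lt_iff l (List.getElem_mem _)).mpr h3
def decRun : List ℕ → List ℕ
  | [] => []
  | [a] => [a]
  | a :: b :: l => if b < a then a :: decRun (b :: l) else [a]

lemma decRun_cons (a : ℕ) (l : List ℕ) : ∃ t, decRun (a :: l) = a :: t := by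
  match l with
  | [] => exact ⟨[], rfl⟩
  | b :: l => rw [decRun]; split; exacts [⟨_, rfl⟩, ⟨[], rfl⟩]

lemma decRun_prefix : ∀ l : List ℕ, decRun l <+: l
  | [] => by simp [decRun]
  | [a] => by simp [decRun]
  | a :: b :: l => by
    rw [decRun]
    split
    · obtain ⟨t, ht⟩ := decRun_prefix (b :: l)
      exact ⟨t, by rw [cons_append, ht]⟩
    · simp

lemma decRun_chain : ∀ l : List ℕ, List.Chain' (fun a b => b < a) (decRun l)
  | [] => by simp [decRun, Chain']
  | [a] => by simp [decRun, Chain']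
  | a :: b :: l => by
    rw [decRun]
    split
    · rename_i hba
      have ih := decRun_chain (b :: l)
      have hhd : ∀ c ∈ (decRun (b :: l)).head?, c < a := by
        intro c hc
        obtain ⟨t, ht⟩ := decRun_cons b l
        rw [ht] at hc
        simp at hc; omega
      exact List.isChain_cons.mpr ⟨hhd, ih⟩
    · simp [Chain']

lemma decRun_ne_nil {l : List ℕ} (h : l ≠ []) : decRun l ≠ [] := by
  match l with
  | [a] => simp [decRun]
  | a :: b :: l => rw [decRun]; split <;> simp

lemma decRun_boundary : ∀ l : List ℕ, (decRun l).length < l.length →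
    l.getD ((decRun l).length - 1) 0 ≤ l.getD ((decRun l).length) 0
  | [] => by simp [decRun]
  | [a] => by simp [decRun]
  | a :: b :: l => by
    rw [decRun]
    split
    · rename_i hba
      intro hlen
      have hne : decRun (b :: l) ≠ [] := decRun_ne_nil (by simp)
      have hpos : 1 ≤ (decRun (b :: l)).length := List.length_pos_iff.mpr hne
      have ih := decRun_boundary (b :: l) (by simp at hlen ⊢; omega)
      simp only [List.length_cons] at *
      rcases Nat.exists_eq_add_of_le hpos with ⟨k, hk⟩
      have hk' : (decRun (b::l)).length = k + 1 := by omega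
      rw [hk'] at ih ⊢
      simpa [List.getD_cons_succ] using ih
    · rename_i hba
      intro _
      simp only [List.length_cons, List.length_nil]
      simp [List.getD]
      omega
lemma t_avoids (n : ℕ) (π : List ℕ) (hmem : ∀ x ∈ π, x ≤ n)
    (ha : AvoidsPat π [3,1,2]) (i : ℕ) :
    AvoidsPat (π.take i ++ (n+1) :: decRun (π.drop i)) [3,1,2] := by
  intro hc
  rw [contains312_iff] at hc
  obtain ⟨x, y, z, hs, hyz, hzx⟩ := hc
  rw [sublist_append_iff] at hs
  obtain ⟨l₁, l₂, heq, h1, h2⟩ := hs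
  rw [sublist_cons_iff] at h2
  rcases h2 with h2 | ⟨r', hr', h2⟩
  · apply ha
    rw [contains312_iff]
    refine ⟨x, y, z, ?_, hyz, hzx⟩
    have : l₁ ++ l₂ <+ π.take i ++ π.drop i :=
      h1.append (h2.trans (decRun_prefix _).sublist)
    rw [take_append_drop] at this
    rwa [heq]
  · subst hr'
    match l₁, heq with
    | [], heq =>
      simp only [nil_append, cons.injEq] at heq
      obtain ⟨hx, heq2⟩ := heq
      have heq2 : r' = [y, z] := heq2.symm
      haveI : IsTrans ℕ (fun a b : ℕ => b < a) := ⟨fun a b c h1 h2 => lt_trans h2 h1⟩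
      have hp : (decRun (π.drop i)).Pairwise (fun a b => b < a) :=
        isChain_iff_pairwise.mp (decRun_chain (π.drop i))
      have : r'.Pairwise (fun a b : ℕ => b < a) := hp.sublist h2
      rw [heq2] at this
      simp at this
      omega
    | [a], heq =>
      simp only [cons_append, nil_append, cons.injEq] at heq
      obtain ⟨hx, hy, _⟩ := heq
      have hxm : x ∈ π := by
        subst hx
        exact (take_sublist i π).mem (h1.mem (by simp))
      have := hmem x hxm
      omega
    | [a, b], heq =>
      simp only [cons_append, nil_append, cons.injEq] at heq
      obtain ⟨hx, hy, hz, _⟩ := heq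
      have hxm : x ∈ π := by
        subst hx
        exact (take_sublist i π).mem (h1.mem (by simp))
      have := hmem x hxm
      omega
    | a :: b :: c :: l, heq => simp at heq
lemma take_insertMax (n : ℕ) (π : List ℕ) (hlen : π.length = n) {i : ℕ} (hi : i ≤ n) (m : ℕ)
    (hm : m ≤ (π.drop i).length) :
    (insertMax π i).take (i + 1 + m) = π.take i ++ (n+1) :: (π.drop i).take m := by
  have hA : (π.take i).length = i := by simp [hlen, hi]
  have : i + 1 + m = (π.take i).length + (1 + m) := by omega
  rw [insertMax, hlen, this, take_append]
  congr 1
  · exact take_of_length_le (by omega)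
  · rw [Nat.add_sub_cancel_left, Nat.add_comm 1 m, take_succ_cons]  -- take (m+1) ((n+1)::D) = (n+1) :: take m D
lemma t_next_contains (n : ℕ) (π : List ℕ) (hlen : π.length = n)
    (hmem : ∀ x ∈ π, x ≤ n) (hnd : π.Nodup) {i : ℕ} (hi : i ≤ n)
    (hlt : i + 1 + (decRun (π.drop i)).length < n + 1) :
    ContainsPat ((insertMax π i).take (i + 1 + (decRun (π.drop i)).length + 1)) [3,1,2] := by
  set D := π.drop i with hD
  set r := decRun D with hr
  have hDsub : D <+ π := drop_sublist i π
  have hrpre : r <+: D := decRun_prefix D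
  have hrlen : r.length < D.length := by
    have : D.length = n - i := by simp [hD, hlen]
    omega
  have hDne : D ≠ [] := by
    intro h; rw [h] at hrlen; simp at hrlen
  have hrne : r ≠ [] := decRun_ne_nil hDne
  have hrval : r = D.take r.length := prefix_iff_eq_take.mp hrpre
  -- the next element
  set e := D[r.length]'hrlen with he
  have htake : (insertMax π i).take (i + 1 + r.length + 1)
      = π.take i ++ (n+1) :: (r ++ [e]) := by
    have h1 : i + 1 + r.length + 1 = i + 1 + (r.length + 1) := by omega
    rw [h1, take_insertMax n π hlen hi (r.length + 1) (by rw [← hD]; omega)]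
    congr 2
    rw [take_succ, ← hrval]
    congr 1
    rw [List.getElem?_eq_getElem hrlen]
    rfl
  -- last of r
  have hrpos : 0 < r.length := List.length_pos_iff.mpr hrne
  have hrlast : r.getLast hrne = D[r.length - 1]'(lt_of_le_of_lt (Nat.sub_le _ _) hrlen) := by
    rw [getLast_eq_getElem]
    exact hrpre.getElem (by omega)
  have hbd := decRun_boundary D hrlen
  rw [getD_eq_getElem _ _ (by omega : r.length - 1 < D.length),
      getD_eq_getElem _ _ hrlen] at hbd
  have hne' : D[r.length - 1]'(by omega) ≠ e := by
    rw [he]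
    intro hc
    have := (hnd.sublist hDsub).getElem_inj_iff.mp hc
    omega
  have hlast_lt : r.getLast hrne < e := by
    rw [hrlast]
    exact lt_of_le_of_ne hbd hne'
  have hemem : e ∈ π := hDsub.mem (List.getElem_mem _)
  rw [htake, contains312_iff]
  refine ⟨n+1, r.getLast hrne, e, ?_, hlast_lt, by have := hmem e hemem; omega⟩
  have h1 : [r.getLast hrne, e] <+ r ++ [e] :=
    Sublist.append (singleton_sublist.mpr (getLast_mem hrne)) (Sublist.refl _)
  have h2 : [n+1, r.getLast hrne, e] <+ (n+1) :: (r ++ [e]) := h1.cons₂ _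
  exact h2.trans (sublist_append_right _ _)
lemma contains_mono {l l' p : List ℕ} (h : ContainsPat l p) (hs : l <+ l') :
    ContainsPat l' p := by
  obtain ⟨s, h1, h2⟩ := h
  exact ⟨s, h1.trans hs, h2⟩

lemma insertMax_length (n : ℕ) (π : List ℕ) (hlen : π.length = n) {i : ℕ} (hi : i ≤ n) :
    (insertMax π i).length = n + 1 := by
  simp [insertMax, hlen]
  omega

lemma insStep_char (n : ℕ) (π : List ℕ) (hlen : π.length = n)
    (hmem : ∀ x ∈ π, x ≤ n) (hnd : π.Nodup) (ha : AvoidsPat π [3,1,2])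
    {i : ℕ} (hi : i ≤ n) :
    insStep [3,1,2] π i = standardize (π.take i ++ (n+1) :: decRun (π.drop i)) := by
  set D := π.drop i with hD
  set r := decRun D with hr
  have hDlen : D.length = n - i := by rw [hD]; simp [hlen]
  have hrlen : r.length ≤ D.length := (decRun_prefix D).length_le
  have hfg : Nat.findGreatest (fun k => AvoidsPat ((insertMax π i).take k) [3,1,2])
      (insertMax π i).length = i + 1 + r.length := by
    rw [Nat.findGreatest_eq_iff]
    refine ⟨?_, ?_, ?_⟩
    · rw [insertMax_length n π hlen hi]; omega
    · intro _
      rw [take_insertMax n π hlen hi r.length (by rw [← hD]; omega)]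
      rw [← hD, ← prefix_iff_eq_take.mp (decRun_prefix D), ← hr]
      exact t_avoids n π hmem ha i
    · intro k hk1 hk2 hP
      rw [insertMax_length n π hlen hi] at hk2
      have hc : ContainsPat ((insertMax π i).take (i + 1 + r.length + 1)) [3,1,2] :=
        t_next_contains n π hlen hmem hnd hi (by rw [← hD, ← hr]; omega)
      have hsub : (insertMax π i).take (i + 1 + r.length + 1) <+ (insertMax π i).take k := by
        have := take_take (i := i + 1 + r.length + 1) (j := k) (l := insertMax π i)
        rw [Nat.min_eq_left (by omega)] at this
        rw [← this]
        exact take_sublist _ _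
      exact hP (contains_mono hc hsub)
  rw [insStep, hfg, take_insertMax n π hlen hi r.length (by rw [← hD]; omega)]
  rw [← hD, ← prefix_iff_eq_take.mp (decRun_prefix D), ← hr]
lemma key_mem_des (n : ℕ) (π : List ℕ) (hlen : π.length = n)
    (hmem : ∀ x ∈ π, x ≤ n) {i j : ℕ} (hij : i < j) (hj : j ≤ n)
    (hleq : i + 1 + (decRun (π.drop i)).length = j + 1 + (decRun (π.drop j)).length) :
    j ∈ desSet (π.take i ++ (n+1) :: decRun (π.drop i)) ∧
      j ∉ desSet (π.take j ++ (n+1) :: decRun (π.drop j)) := by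
  have hi : i ≤ n := by omega
  have hA : (π.take i).length = i := by simp [hlen]; omega
  have hAj : (π.take j).length = j := by simp [hlen]; omega
  set ri := decRun (π.drop i) with hri
  set rj := decRun (π.drop j) with hrj
  have hrimem : ∀ x ∈ ri, x ≤ n := fun x hx =>
    hmem x ((drop_sublist i π).subset ((decRun_prefix _).sublist.subset hx))
  have htilen : (π.take i ++ (n+1) :: ri).length = i + 1 + ri.length := by
    simp [hA]; omega
  have htjlen : (π.take j ++ (n+1) :: rj).length = j + 1 + rj.length := by
    simp [hAj]; omega
  constructor
  · -- j ∈ desSet (t i)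
    have hjlt : j < i + 1 + ri.length := by omega
    refine ⟨by omega, by rw [htilen]; omega, ?_⟩
    have hjlt' : j < (π.take i ++ (n+1) :: ri).length := by rw [htilen]; omega
    have hj1lt' : j - 1 < (π.take i ++ (n+1) :: ri).length := by omega
    rw [getD_eq_getElem _ _ hjlt', getD_eq_getElem _ _ hj1lt']
    rw [getElem_append_right (by omega : (π.take i).length ≤ j)]
    rcases Nat.eq_or_lt_of_le (by omega : i + 1 ≤ j) with hcase | hcase
    · -- j = i + 1
      rw [getElem_append_right (by omega : (π.take i).length ≤ j - 1)]
      have e1 : j - (π.take i).length = 1 := by omega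
      have e2 : j - 1 - (π.take i).length = 0 := by omega
      simp only [e1, e2]
      rw [List.getElem_cons_zero]
      have h1 : ((n+1) :: ri)[1]'(by simp; omega) = ri[0]'(by omega) :=
        List.getElem_cons_succ ..
      rw [h1]
      have := hrimem (ri[0]'(by omega)) (List.getElem_mem _)
      omega
    · -- j > i + 1 : both inside ri, consecutive
      rw [getElem_append_right (by omega : (π.take i).length ≤ j - 1)]
      have e1 : j - (π.take i).length = (j - i - 2) + 1 + 1 := by omega
      have e2 : j - 1 - (π.take i).length = (j - i - 2) + 1 := by omega
      simp only [e1, e2]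
      rw [List.getElem_cons_succ, List.getElem_cons_succ]
      have hchain := decRun_chain (π.drop i)
      rw [Chain', isChain_iff_getElem] at hchain
      have := hchain (j - i - 2) (by rw [← hri]; omega)
      simpa using this
  · -- j ∉ desSet (t j)
    rintro ⟨h1, h2, h3⟩
    have h2' : j < j + 1 + rj.length := by rwa [htjlen] at h2
    have hq1 : j < (π.take j ++ (n+1) :: rj).length := by rw [htjlen]; omega
    have hq2 : j - 1 < (π.take j ++ (n+1) :: rj).length := by omega
    rw [getD_eq_getElem _ _ hq1] at h3
    rw [getD_eq_getElem _ _ hq2] at h3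
    rw [getElem_append_right (by omega : (π.take j).length ≤ j)] at h3
    have e1 : j - (π.take j).length = 0 := by omega
    simp only [e1, List.getElem_cons_zero] at h3
    have hj1 : j - 1 < (π.take j).length := by omega
    rw [List.getElem_append_left hj1] at h3  -- name?
    have : (π.take j)[j-1] ∈ π := (take_sublist j π).subset (List.getElem_mem _)
    have := hmem _ this
    omega
/-- For a 312-avoiding permutation `π` of length `n`, the map sending an insertion
position `i ∈ {0,…,n}` to the pair (length, descent set) of the output of the
312-insertion step at position `i` is injective: the length and descent set of the result
determine where the new maximum was inserted. -/
theorem insStep_des_injective (n : ℕ) (π : List ℕ)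
    (h : IsPermList n π) (ha : AvoidsPat π [3, 1, 2]) :
    ∀ i j, i ≤ n → j ≤ n →
      ((insStep [3, 1, 2] π i).length, desSet (insStep [3, 1, 2] π i)) =
        ((insStep [3, 1, 2] π j).length, desSet (insStep [3, 1, 2] π j)) →
      i = j := by
  have hlen : π.length = n := by
    have := h.length_eq; simpa using this
  have hmem : ∀ x ∈ π, x ≤ n := by
    intro x hx
    have : x ∈ range' 1 n := h.subset hx
    rw [mem_range'_1] at this; omega
  have hnd : π.Nodup := h.nodup_iff.mpr (nodup_range' (s := 1) (n := n))
  intro i j hi hj heq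
  rw [Prod.mk.injEq] at heq
  obtain ⟨hL, hD⟩ := heq
  have key : ∀ k, k ≤ n →
      (insStep [3,1,2] π k).length = k + 1 + (decRun (π.drop k)).length ∧
      desSet (insStep [3,1,2] π k) = desSet (π.take k ++ (n+1) :: decRun (π.drop k)) := by
    intro k hk
    rw [insStep_char n π hlen hmem hnd ha hk, standardize_length, standardize_desSet]
    refine ⟨?_, rfl⟩
    simp [hlen]
    omega
  obtain ⟨hLi, hDi⟩ := key i hi
  obtain ⟨hLj, hDj⟩ := key j hj
  rw [hLi, hLj] at hL
  rw [hDi, hDj] at hD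
  by_contra hne
  rcases lt_trichotomy i j with hij | hij | hij
  · obtain ⟨hin, hout⟩ := key_mem_des n π hlen hmem hij hj hL
    rw [hD] at hin; exact hout hin
  · exact hne hij
  · obtain ⟨hin, hout⟩ := key_mem_des n π hlen hmem hij hi hL.symm
    rw [← hD] at hin; exact hout hin
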